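/- There exists a 28×28 integer matrix W with entries in {−1,0,1} such that W·Wᵀ = 12·I and |W| is the adjacency matrix of a strongly regular graph SRG(28,12,6,4); that is, a strongly regular graph with parameters (28,12,6,4) admits an srg-balanced signing over {1,−1}. -/

import Mathlib

open Matrix

/-- The all-ones matrix. -/
def allOnes (ι : Type*) : Matrix ι ι ℤ := Matrix.of fun _ _ => 1

/-- `A` is the adjacency matrix of a strongly regular graph with parameters `(v, k, l, mu)`. -/
def IsSRGAdj {ι : Type*} [Fintype ι] [DecidableEq ι]
    (A : Matrix ι ι ℤ) (k l mu : ℤ) : Prop :=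
  A.IsSymm ∧ (∀ i, A i i = 0) ∧ (∀ i j, A i j = 0 ∨ A i j = 1) ∧
    A * A = k • (1 : Matrix ι ι ℤ) + l • A + mu • (allOnes ι - 1 - A)

def W18 : Matrix (Fin 28) (Fin 28) ℤ :=
  !![0, -1, 1, 1, -1, -1, -1, 1, 1, -1, -1, 1, -1, 0, 0, 0, 0, 0, 0, 0, 0, 0, 0, 0, 0, 0, 0, 0;
  1, 0, 1, 1, 1, 1, 1, 1, 0, 0, 0, 0, 0, 1, -1, -1, 1, -1, 0, 0, 0, 0, 0, 0, 0, 0, 0, 0;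
  -1, -1, 0, 1, -1, 1, 1, 0, -1, 0, 0, 0, 0, -1, 0, 0, 0, 0, -1, -1, -1, -1, 0, 0, 0, 0, 0, 0;
  -1, -1, -1, 0, 1, 1, -1, 0, 0, -1, 0, 0, 0, 0, -1, 0, 0, 0, 1, 0, 0, 0, -1, 1, 1, 0, 0, 0;
  1, -1, 1, -1, 0, 1, -1, 0, 0, 0, 1, 0, 0, 0, 0, 1, 0, 0, 0, -1, 0, 0, 1, 0, 0, 1, 1, 0;
  1, -1, -1, -1, -1, 0, 1, 0, 0, 0, 0, 1, 0, 0, 0, 0, 1, 0, 0, 0, 1, 0, 0, 1, 0, -1, 0, -1;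
  1, -1, -1, 1, 1, -1, 0, 0, 0, 0, 0, 0, 1, 0, 0, 0, 0, 1, 0, 0, 0, -1, 0, 0, -1, 0, 1, 1;
  -1, -1, 0, 0, 0, 0, 0, 0, 1, 1, -1, -1, 1, 1, 1, 1, 1, -1, 0, 0, 0, 0, 0, 0, 0, 0, 0, 0;
  1, 0, -1, 0, 0, 0, 0, 1, 0, 1, -1, -1, -1, -1, 0, 0, 0, 0, 1, -1, -1, 1, 0, 0, 0, 0, 0, 0;
  -1, 0, 0, -1, 0, 0, 0, 1, -1, 0, -1, 1, 1, 0, -1, 0, 0, 0, 1, 0, 0, 0, 1, -1, -1, 0, 0, 0;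
  -1, 0, 0, 0, 1, 0, 0, -1, 1, 1, 0, 1, -1, 0, 0, -1, 0, 0, 0, -1, 0, 0, 1, 0, 0, -1, 1, 0;
  -1, 0, 0, 0, 0, -1, 0, 1, -1, 1, 1, 0, -1, 0, 0, 0, 1, 0, 0, 0, 1, 0, 0, 1, 0, 1, 0, 1;
  -1, 0, 0, 0, 0, 0, 1, 1, 1, -1, 1, -1, 0, 0, 0, 0, 0, 1, 0, 0, 0, 1, 0, 0, -1, 0, 1, -1;
  0, -1, 1, 0, 0, 0, 0, -1, -1, 0, 0, 0, 0, 0, 1, -1, 1, 1, 1, 1, -1, 1, 0, 0, 0, 0, 0, 0;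
  0, -1, 0, -1, 0, 0, 0, 1, 0, 1, 0, 0, 0, 1, 0, -1, -1, 1, -1, 0, 0, 0, -1, -1, 1, 0, 0, 0;
  0, 1, 0, 0, -1, 0, 0, -1, 0, 0, -1, 0, 0, 1, -1, 0, 1, 1, 0, -1, 0, 0, -1, 0, 0, 1, 1, 0;
  0, -1, 0, 0, 0, -1, 0, -1, 0, 0, 0, -1, 0, -1, -1, -1, 0, -1, 0, 0, 1, 0, 0, -1, 0, 1, 0, -1;
  0, -1, 0, 0, 0, 0, 1, -1, 0, 0, 0, 0, -1, 1, -1, 1, -1, 0, 0, 0, 0, 1, 0, 0, -1, 0, -1, 1;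
  0, 0, 1, -1, 0, 0, 0, 0, 1, 1, 0, 0, 0, -1, -1, 0, 0, 0, 0, 1, -1, -1, -1, 1, -1, 0, 0, 0;
  0, 0, 1, 0, 1, 0, 0, 0, -1, 0, -1, 0, 0, -1, 0, 1, 0, 0, -1, 0, 1, 1, -1, 0, 0, -1, 1, 0;
  0, 0, 1, 0, 0, -1, 0, 0, -1, 0, 0, -1, 0, 1, 0, 0, -1, 0, 1, -1, 0, -1, 0, 1, 0, -1, 0, -1;
  0, 0, 1, 0, 0, 0, 1, 0, 1, 0, 0, 0, 1, -1, 0, 0, 0, 1, 1, -1, 1, 0, 0, 0, 1, 0, -1, 1;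
  0, 0, 0, 1, -1, 0, 0, 0, 0, 1, 1, 0, 0, 0, -1, 1, 0, 0, 1, 1, 0, 0, 0, -1, 1, -1, 1, 0;
  0, 0, 0, 1, 0, 1, 0, 0, 0, 1, 0, 1, 0, 0, 1, 0, -1, 0, 1, 0, 1, 0, -1, 0, -1, 1, 0, -1;
  0, 0, 0, -1, 0, 0, 1, 0, 0, -1, 0, 0, -1, 0, 1, 0, 0, -1, 1, 0, 0, -1, -1, -1, 0, 0, 1, 1;
  0, 0, 0, 0, 1, -1, 0, 0, 0, 0, 1, 1, 0, 0, 0, 1, 1, 0, 0, -1, -1, 0, -1, -1, 0, 0, -1, -1;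
  0, 0, 0, 0, -1, 0, -1, 0, 0, 0, 1, 0, 1, 0, 0, -1, 0, -1, 0, -1, 0, 1, -1, 0, -1, -1, 0, 1;
  0, 0, 0, 0, 0, -1, 1, 0, 0, 0, 0, 1, 1, 0, 0, 0, -1, -1, 0, 0, -1, 1, 0, 1, 1, 1, 1, 0]

def A18 : Matrix (Fin 28) (Fin 28) ℤ :=
  !![0, 1, 1, 1, 1, 1, 1, 1, 1, 1, 1, 1, 1, 0, 0, 0, 0, 0, 0, 0, 0, 0, 0, 0, 0, 0, 0, 0;
  1, 0, 1, 1, 1, 1, 1, 1, 0, 0, 0, 0, 0, 1, 1, 1, 1, 1, 0, 0, 0, 0, 0, 0, 0, 0, 0, 0;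
  1, 1, 0, 1, 1, 1, 1, 0, 1, 0, 0, 0, 0, 1, 0, 0, 0, 0, 1, 1, 1, 1, 0, 0, 0, 0, 0, 0;
  1, 1, 1, 0, 1, 1, 1, 0, 0, 1, 0, 0, 0, 0, 1, 0, 0, 0, 1, 0, 0, 0, 1, 1, 1, 0, 0, 0;
  1, 1, 1, 1, 0, 1, 1, 0, 0, 0, 1, 0, 0, 0, 0, 1, 0, 0, 0, 1, 0, 0, 1, 0, 0, 1, 1, 0;
  1, 1, 1, 1, 1, 0, 1, 0, 0, 0, 0, 1, 0, 0, 0, 0, 1, 0, 0, 0, 1, 0, 0, 1, 0, 1, 0, 1;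
  1, 1, 1, 1, 1, 1, 0, 0, 0, 0, 0, 0, 1, 0, 0, 0, 0, 1, 0, 0, 0, 1, 0, 0, 1, 0, 1, 1;
  1, 1, 0, 0, 0, 0, 0, 0, 1, 1, 1, 1, 1, 1, 1, 1, 1, 1, 0, 0, 0, 0, 0, 0, 0, 0, 0, 0;
  1, 0, 1, 0, 0, 0, 0, 1, 0, 1, 1, 1, 1, 1, 0, 0, 0, 0, 1, 1, 1, 1, 0, 0, 0, 0, 0, 0;
  1, 0, 0, 1, 0, 0, 0, 1, 1, 0, 1, 1, 1, 0, 1, 0, 0, 0, 1, 0, 0, 0, 1, 1, 1, 0, 0, 0;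
  1, 0, 0, 0, 1, 0, 0, 1, 1, 1, 0, 1, 1, 0, 0, 1, 0, 0, 0, 1, 0, 0, 1, 0, 0, 1, 1, 0;
  1, 0, 0, 0, 0, 1, 0, 1, 1, 1, 1, 0, 1, 0, 0, 0, 1, 0, 0, 0, 1, 0, 0, 1, 0, 1, 0, 1;
  1, 0, 0, 0, 0, 0, 1, 1, 1, 1, 1, 1, 0, 0, 0, 0, 0, 1, 0, 0, 0, 1, 0, 0, 1, 0, 1, 1;
  0, 1, 1, 0, 0, 0, 0, 1, 1, 0, 0, 0, 0, 0, 1, 1, 1, 1, 1, 1, 1, 1, 0, 0, 0, 0, 0, 0;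
  0, 1, 0, 1, 0, 0, 0, 1, 0, 1, 0, 0, 0, 1, 0, 1, 1, 1, 1, 0, 0, 0, 1, 1, 1, 0, 0, 0;
  0, 1, 0, 0, 1, 0, 0, 1, 0, 0, 1, 0, 0, 1, 1, 0, 1, 1, 0, 1, 0, 0, 1, 0, 0, 1, 1, 0;
  0, 1, 0, 0, 0, 1, 0, 1, 0, 0, 0, 1, 0, 1, 1, 1, 0, 1, 0, 0, 1, 0, 0, 1, 0, 1, 0, 1;
  0, 1, 0, 0, 0, 0, 1, 1, 0, 0, 0, 0, 1, 1, 1, 1, 1, 0, 0, 0, 0, 1, 0, 0, 1, 0, 1, 1;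
  0, 0, 1, 1, 0, 0, 0, 0, 1, 1, 0, 0, 0, 1, 1, 0, 0, 0, 0, 1, 1, 1, 1, 1, 1, 0, 0, 0;
  0, 0, 1, 0, 1, 0, 0, 0, 1, 0, 1, 0, 0, 1, 0, 1, 0, 0, 1, 0, 1, 1, 1, 0, 0, 1, 1, 0;
  0, 0, 1, 0, 0, 1, 0, 0, 1, 0, 0, 1, 0, 1, 0, 0, 1, 0, 1, 1, 0, 1, 0, 1, 0, 1, 0, 1;
  0, 0, 1, 0, 0, 0, 1, 0, 1, 0, 0, 0, 1, 1, 0, 0, 0, 1, 1, 1, 1, 0, 0, 0, 1, 0, 1, 1;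
  0, 0, 0, 1, 1, 0, 0, 0, 0, 1, 1, 0, 0, 0, 1, 1, 0, 0, 1, 1, 0, 0, 0, 1, 1, 1, 1, 0;
  0, 0, 0, 1, 0, 1, 0, 0, 0, 1, 0, 1, 0, 0, 1, 0, 1, 0, 1, 0, 1, 0, 1, 0, 1, 1, 0, 1;
  0, 0, 0, 1, 0, 0, 1, 0, 0, 1, 0, 0, 1, 0, 1, 0, 0, 1, 1, 0, 0, 1, 1, 1, 0, 0, 1, 1;
  0, 0, 0, 0, 1, 1, 0, 0, 0, 0, 1, 1, 0, 0, 0, 1, 1, 0, 0, 1, 1, 0, 1, 1, 0, 0, 1, 1;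
  0, 0, 0, 0, 1, 0, 1, 0, 0, 0, 1, 0, 1, 0, 0, 1, 0, 1, 0, 1, 0, 1, 1, 0, 1, 1, 0, 1;
  0, 0, 0, 0, 0, 1, 1, 0, 0, 0, 0, 1, 1, 0, 0, 0, 1, 1, 0, 0, 1, 1, 0, 1, 1, 1, 1, 0]

instance matEntryDecEq (A : Matrix (Fin 28) (Fin 28) ℤ) (i j : Fin 28) (b : ℤ) :
    Decidable (A i j = b) := Int.decEq _ _

instance matEntryDecEq' (a : ℤ) (B : Matrix (Fin 28) (Fin 28) ℤ) (k l : Fin 28) :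
    Decidable (a = B k l) := Int.decEq _ _

instance matEntryDecEq'' (A B : Matrix (Fin 28) (Fin 28) ℤ) (i j k l : Fin 28) :
    Decidable (A i j = B k l) := Int.decEq _ _

set_option maxRecDepth 1000000 in
set_option maxHeartbeats 40000000 in
theorem W18_entries : ∀ i j, W18 i j = -1 ∨ W18 i j = 0 ∨ W18 i j = 1 := by decide

set_option maxRecDepth 1000000 in
set_option maxHeartbeats 40000000 in
theorem W18_prod : W18 * W18ᵀ = (12 : ℤ) • 1 := by decide

set_option maxRecDepth 1000000 in
set_option maxHeartbeats 40000000 in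
theorem W18_sq : ∀ i j, W18 i j * W18 i j = A18 i j := by decide

set_option maxRecDepth 1000000 in
set_option maxHeartbeats 40000000 in
theorem A18_symm : ∀ i j : Fin 28, A18ᵀ i j = A18 i j := by decide

set_option maxRecDepth 1000000 in
set_option maxHeartbeats 40000000 in
theorem A18_diag : ∀ i, A18 i i = 0 := by decide

set_option maxRecDepth 1000000 in
set_option maxHeartbeats 40000000 in
theorem A18_01 : ∀ i j, A18 i j = 0 ∨ A18 i j = 1 := by decide

set_option maxRecDepth 1000000 in
set_option maxHeartbeats 40000000 in
theorem A18_eq : ∀ i j : Fin 28, (A18 * A18) i j =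
    12 * (if i = j then (1:ℤ) else 0) + 6 * A18 i j +
      4 * (1 - (if i = j then (1:ℤ) else 0) - A18 i j) := by decide

theorem abs_of_pm (t : ℤ) (h : t = -1 ∨ t = 0 ∨ t = 1) : |t| = t * t := by
  rcases h with rfl | rfl | rfl <;> rfl

theorem W18_map : W18.map (fun t => |t|) = A18 := by
  apply Matrix.ext
  intro i j
  rw [Matrix.map_apply, abs_of_pm _ (W18_entries i j), W18_sq i j]

theorem A18_srg : IsSRGAdj A18 12 6 4 := by
  refine ⟨Matrix.ext A18_symm, A18_diag, A18_01, ?_⟩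
  apply Matrix.ext
  intro i j
  have h := A18_eq i j
  simp only [Matrix.add_apply, Matrix.smul_apply, Matrix.sub_apply, Matrix.one_apply,
    allOnes, Matrix.of_apply, smul_eq_mul]
  convert h using 2

theorem stmt18 :
    ∃ W : Matrix (Fin 28) (Fin 28) ℤ,
      (∀ i j, W i j = -1 ∨ W i j = 0 ∨ W i j = 1) ∧
      W * Wᵀ = (12 : ℤ) • 1 ∧
      IsSRGAdj (W.map fun t => |t|) 12 6 4 :=
  ⟨W18, W18_entries, W18_prod, W18_map ▸ A18_srg⟩
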